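/- Two nested logic programs P and Q are strongly equivalent if and only if they have the same SE-models. -/
import Mathlib


open scoped Classical

inductive Lit where
  | pos : ℕ → Lit
  | neg : ℕ → Lit
deriving DecidableEq

inductive Fml where
  | bot : Fml
  | top : Fml
  | lit : Lit → Fml
  | not : Fml → Fml
  | conj : Fml → Fml → Fml
  | disj : Fml → Fml → Fml
deriving DecidableEq

structure Rule where
  head : Fml
  body : Fml
deriving DecidableEq

abbrev Prog := Set Rule

/-- A set of literals is consistent if it contains no complementary pair. -/
def Consistent (X : Set Lit) : Prop :=
  ∀ a : ℕ, ¬ (Lit.pos a ∈ X ∧ Lit.neg a ∈ X)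

def Sat (X : Set Lit) : Fml → Prop
  | Fml.bot => False
  | Fml.top => True
  | Fml.lit l => l ∈ X
  | Fml.not F => ¬ Sat X F
  | Fml.conj F G => Sat X F ∧ Sat X G
  | Fml.disj F G => Sat X F ∨ Sat X G

def SatRule (X : Set Lit) (r : Rule) : Prop := Sat X r.body → Sat X r.head

def SatProg (X : Set Lit) (P : Prog) : Prop := ∀ r ∈ P, SatRule X r

/-- The reduct of a formula relative to X. -/
noncomputable def Reduct (X : Set Lit) : Fml → Fml
  | Fml.bot => Fml.bot
  | Fml.top => Fml.top
  | Fml.lit l => Fml.lit l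
  | Fml.not F => if Sat X F then Fml.bot else Fml.top
  | Fml.conj F G => Fml.conj (Reduct X F) (Reduct X G)
  | Fml.disj F G => Fml.disj (Reduct X F) (Reduct X G)

noncomputable def ReductRule (X : Set Lit) (r : Rule) : Rule :=
  ⟨Reduct X r.head, Reduct X r.body⟩

noncomputable def ReductProg (X : Set Lit) (P : Prog) : Prog :=
  ReductRule X '' P

/-- Y is an answer set for P: Y is minimal among consistent sets satisfying the reduct of P w.r.t. Y. -/
def AnswerSet (Y : Set Lit) (P : Prog) : Prop :=
  Consistent Y ∧ SatProg Y (ReductProg Y P) ∧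
    ∀ Z : Set Lit, Consistent Z → SatProg Z (ReductProg Y P) → Z ⊆ Y → Z = Y

def SEModel (P : Prog) (X Y : Set Lit) : Prop :=
  Consistent X ∧ Consistent Y ∧ X ⊆ Y ∧ SatProg Y P ∧ SatProg X (ReductProg Y P)

def StrongEq (P Q : Prog) : Prop :=
  ∀ R : Prog, ∀ Y : Set Lit, AnswerSet Y (P ∪ R) ↔ AnswerSet Y (Q ∪ R)

def Fml.negFree : Fml → Prop
  | Fml.bot => True
  | Fml.top => True
  | Fml.lit l => ∃ a, l = Lit.pos a
  | Fml.not F => F.negFree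
  | Fml.conj F G => F.negFree ∧ G.negFree
  | Fml.disj F G => F.negFree ∧ G.negFree

def ProgNegFree (P : Prog) : Prop := ∀ r ∈ P, r.head.negFree ∧ r.body.negFree

/-- The set of atoms (positive literals) in a set of literals. -/
def PosLits (Z : Set Lit) : Set Lit := {l ∈ Z | ∃ a, l = Lit.pos a}

def AtomsOnly (Z : Set Lit) : Prop := ∀ l ∈ Z, ∃ a, l = Lit.pos a

lemma sat_reduct_self (Y : Set Lit) (F : Fml) : Sat Y (Reduct Y F) ↔ Sat Y F := by
  induction F with
  | bot => simp [Reduct]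
  | top => simp [Reduct]
  | lit l => simp [Reduct]
  | not F ih => by_cases h : Sat Y F <;> simp [Reduct, h, Sat]
  | conj F G ihF ihG => simp [Reduct, Sat, ihF, ihG]
  | disj F G ihF ihG => simp [Reduct, Sat, ihF, ihG]

lemma satProg_reduct_self (Y : Set Lit) (P : Prog) :
    SatProg Y (ReductProg Y P) ↔ SatProg Y P := by
  constructor
  · intro h r hr hb
    have h1 := h (ReductRule Y r) ⟨r, hr, rfl⟩
    exact (sat_reduct_self Y r.head).1 (h1 ((sat_reduct_self Y r.body).2 hb))
  · rintro h r ⟨s, hs, rfl⟩ hb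
    exact (sat_reduct_self _ _).2 (h s hs ((sat_reduct_self _ _).1 hb))

lemma satProg_union (Z : Set Lit) (A B : Prog) :
    SatProg Z (A ∪ B) ↔ SatProg Z A ∧ SatProg Z B := by
  constructor
  · intro h
    exact ⟨fun r hr => h r (Or.inl hr), fun r hr => h r (Or.inr hr)⟩
  · rintro ⟨h1, h2⟩ r (hr | hr)
    · exact h1 r hr
    · exact h2 r hr

lemma reductProg_union (Y : Set Lit) (A B : Prog) :
    ReductProg Y (A ∪ B) = ReductProg Y A ∪ ReductProg Y B :=
  Set.image_union _ _ _

lemma se_imp (P Q : Prog) (h : ∀ X Y : Set Lit, SEModel P X Y ↔ SEModel Q X Y)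
    (R : Prog) (Y : Set Lit) (hA : AnswerSet Y (P ∪ R)) : AnswerSet Y (Q ∪ R) := by
  obtain ⟨cY, hsat, hmin⟩ := hA
  rw [reductProg_union, satProg_union] at hsat
  have hYP : SatProg Y P := (satProg_reduct_self Y P).1 hsat.1
  have hQse : SEModel Q Y Y := (h Y Y).1 ⟨cY, cY, subset_rfl, hYP, hsat.1⟩
  refine ⟨cY, ?_, ?_⟩
  · rw [reductProg_union, satProg_union]
    exact ⟨hQse.2.2.2.2, hsat.2⟩
  · intro Z cZ hZ hZY
    rw [reductProg_union, satProg_union] at hZ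
    have hP := (h Z Y).2 ⟨cZ, cY, hZY, hQse.2.2.2.1, hZ.1⟩
    apply hmin Z cZ _ hZY
    rw [reductProg_union, satProg_union]
    exact ⟨hP.2.2.2.2, hZ.2⟩

lemma strongEq_symm {P Q : Prog} (h : StrongEq P Q) : StrongEq Q P :=
  fun R Y => (h R Y).symm

lemma strong_imp (P Q : Prog) (h : StrongEq P Q) (X Y : Set Lit)
    (hm : SEModel P X Y) : SEModel Q X Y := by
  obtain ⟨cX, cY, hXY, hYP, hXP⟩ := hm
  -- Step 1: Y ⊨ Q
  have hYQ : SatProg Y Q := by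
    set R1 : Prog := (fun l => (⟨Fml.lit l, Fml.top⟩ : Rule)) '' Y with hR1
    have hA : AnswerSet Y (P ∪ R1) := by
      refine ⟨cY, ?_, ?_⟩
      · rw [reductProg_union, satProg_union]
        refine ⟨(satProg_reduct_self Y P).2 hYP, ?_⟩
        rintro r ⟨s, ⟨l, hl, rfl⟩, rfl⟩ _
        simpa [ReductRule, Reduct, Sat, SatRule] using hl
      · intro Z cZ hZ hZY
        rw [reductProg_union, satProg_union] at hZ
        refine Set.Subset.antisymm hZY fun l hl => ?_
        have := hZ.2 (ReductRule Y ⟨Fml.lit l, Fml.top⟩) ⟨_, ⟨l, hl, rfl⟩, rfl⟩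
        simpa [ReductRule, Reduct, Sat, SatRule] using this
    have hB := (h R1 Y).1 hA
    obtain ⟨_, hsat, _⟩ := hB
    rw [reductProg_union, satProg_union] at hsat
    exact (satProg_reduct_self Y Q).1 hsat.1
  refine ⟨cX, cY, hXY, hYQ, ?_⟩
  -- Step 2: X ⊨ Q^Y
  by_cases hXeqY : X = Y
  · subst hXeqY
    exact (satProg_reduct_self X Q).2 hYQ
  · by_contra hXQ
    set R2 : Prog := (fun l => (⟨Fml.lit l, Fml.top⟩ : Rule)) '' X ∪
        {r | ∃ p ∈ Y \ X, ∃ q ∈ Y \ X, r = (⟨Fml.lit p, Fml.lit q⟩ : Rule)} with hR2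
    have hA : AnswerSet Y (Q ∪ R2) := by
      refine ⟨cY, ?_, ?_⟩
      · rw [reductProg_union, satProg_union]
        refine ⟨(satProg_reduct_self Y Q).2 hYQ, ?_⟩
        rintro r ⟨s, (⟨l, hl, rfl⟩ | ⟨p, hp, q, hq, rfl⟩), rfl⟩
        · intro _
          simpa [ReductRule, Reduct, Sat, SatRule] using hXY hl
        · intro _
          simpa [ReductRule, Reduct, Sat, SatRule] using hp.1
      · intro Z cZ hZ hZY
        rw [reductProg_union, satProg_union] at hZ
        have hXZ : X ⊆ Z := by
          intro l hl
          have := hZ.2 (ReductRule Y ⟨Fml.lit l, Fml.top⟩)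
            ⟨_, Or.inl ⟨l, hl, rfl⟩, rfl⟩
          simpa [ReductRule, Reduct, Sat, SatRule] using this
        by_cases hZX : Z ⊆ X
        · exfalso
          have : Z = X := Set.Subset.antisymm hZX hXZ
          subst this
          exact hXQ hZ.1
        · obtain ⟨q, hqZ, hqX⟩ := Set.not_subset.1 hZX
          have hqYX : q ∈ Y \ X := ⟨hZY hqZ, hqX⟩
          refine Set.Subset.antisymm hZY fun l hl => ?_
          by_cases hlX : l ∈ X
          · exact hXZ hlX
          · have := hZ.2 (ReductRule Y ⟨Fml.lit l, Fml.lit q⟩)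
              ⟨_, Or.inr ⟨l, ⟨hl, hlX⟩, q, hqYX, rfl⟩, rfl⟩
            simpa [ReductRule, Reduct, Sat, SatRule] using this hqZ
    have hB := (h R2 Y).2 hA
    obtain ⟨_, _, hmin⟩ := hB
    apply hXeqY
    apply hmin X cX _ hXY
    rw [reductProg_union, satProg_union]
    refine ⟨hXP, ?_⟩
    rintro r ⟨s, (⟨l, hl, rfl⟩ | ⟨p, hp, q, hq, rfl⟩), rfl⟩
    · intro _
      simpa [ReductRule, Reduct, Sat, SatRule] using hl
    · intro hb
      exfalso
      have : q ∈ X := by simpa [ReductRule, Reduct, Sat, SatRule] using hb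
      exact hq.2 this

/-- Nested programs are strongly equivalent iff they have the same SE-models. -/
theorem stmt4 (P Q : Prog) :
    StrongEq P Q ↔ ∀ X Y : Set Lit, SEModel P X Y ↔ SEModel Q X Y := by
  constructor
  · intro h X Y
    exact ⟨strong_imp P Q h X Y, strong_imp Q P (strongEq_symm h) X Y⟩
  · intro h R Y
    exact ⟨se_imp P Q h R Y, se_imp Q P (fun X Y => (h X Y).symm) R Y⟩
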